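/- Let x₁, …, x_N be distinct real numbers and c > 0. The inverse multiquadric interpolation matrix A with entries A_{ij} = (c² + (x_i − x_j)²)^{−1/2} is positive definite, hence nonsingular. -/

import Mathlib

open Real MeasureTheory Set Matrix

lemma exists_moment_ne {N : ℕ} (x : Fin N → ℝ) (hx : Function.Injective x)
    (w : Fin N → ℝ) (hw : w ≠ 0) : ∃ n : ℕ, (∑ i, w i * x i ^ n) ≠ 0 := by
  by_contra h
  push_neg at h
  apply hw
  funext k
  have key : ∀ p : Polynomial ℝ, ∑ i, w i * p.eval (x i) = 0 := by
    intro p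
    have h1 : ∀ i : Fin N, w i * p.eval (x i)
        = ∑ n ∈ p.support, p.coeff n * (w i * x i ^ n) := by
      intro i
      rw [Polynomial.eval_eq_sum, Polynomial.sum_def, Finset.mul_sum]
      exact Finset.sum_congr rfl (fun n _ => by ring)
    simp_rw [h1]
    rw [Finset.sum_comm]
    refine Finset.sum_eq_zero fun n _ => ?_
    rw [← Finset.mul_sum, h n, mul_zero]
  have hk := key (Lagrange.basis Finset.univ x k)
  have : ∀ i : Fin N, w i * (Lagrange.basis Finset.univ x k).eval (x i)
      = if i = k then w i else 0 := by
    intro i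
    by_cases hik : i = k
    · subst hik
      rw [Lagrange.eval_basis_self (hx.injOn) (Finset.mem_univ i), mul_one, if_pos rfl]
    · rw [Lagrange.eval_basis_of_ne (Ne.symm hik) (Finset.mem_univ i), mul_zero, if_neg hik]
  rw [Finset.sum_congr rfl (fun i _ => this i), Finset.sum_ite_eq' Finset.univ k w] at hk
  simpa using hk

lemma real_exp_eq_tsum (y : ℝ) : Real.exp y = ∑' n : ℕ, y ^ n / n.factorial := by
  rw [Real.exp_eq_exp_ℝ, NormedSpace.exp_eq_tsum_div]

lemma gauss_quad_pos {N : ℕ} (x : Fin N → ℝ) (hx : Function.Injective x)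
    (v : Fin N → ℝ) (hv : v ≠ 0) {t : ℝ} (ht : 0 < t) :
    0 < ∑ i, ∑ j, v i * v j * Real.exp (-((x i - x j) ^ 2 * t)) := by
  set w : Fin N → ℝ := fun i => v i * Real.exp (-(x i ^ 2 * t)) with hwdef
  have hw : w ≠ 0 := by
    intro h
    apply hv
    funext i
    have := congrFun h i
    simp only [hwdef, Pi.zero_apply, mul_eq_zero] at this
    rcases this with h' | h'
    · exact h'
    · exact absurd h' (Real.exp_ne_zero _)
  have hpt : ∀ i j : Fin N, v i * v j * Real.exp (-((x i - x j) ^ 2 * t))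
      = ∑' n : ℕ, w i * w j * ((2 * t * x i * x j) ^ n / n.factorial) := by
    intro i j
    calc v i * v j * Real.exp (-((x i - x j) ^ 2 * t))
        = w i * w j * Real.exp (2 * t * x i * x j) := by
          simp only [hwdef]
          rw [show -((x i - x j) ^ 2 * t)
              = -(x i ^ 2 * t) + -(x j ^ 2 * t) + 2 * t * x i * x j by ring,
            Real.exp_add, Real.exp_add]
          ring
      _ = w i * w j * ∑' n : ℕ, (2 * t * x i * x j) ^ n / n.factorial := by
          rw [real_exp_eq_tsum]
      _ = ∑' n : ℕ, w i * w j * ((2 * t * x i * x j) ^ n / n.factorial) :=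
          tsum_mul_left.symm
  have hsum : ∀ i j : Fin N,
      Summable (fun n : ℕ => w i * w j * ((2 * t * x i * x j) ^ n / n.factorial)) :=
    fun i j => (Real.summable_pow_div_factorial _).mul_left _
  have hsum2 : ∀ i : Fin N,
      Summable (fun n : ℕ => ∑ j, w i * w j * ((2 * t * x i * x j) ^ n / n.factorial)) :=
    fun i => summable_sum (fun j _ => hsum i j)
  have hswap : ∑ i, ∑ j, v i * v j * Real.exp (-((x i - x j) ^ 2 * t))
      = ∑' n : ℕ, ∑ i, ∑ j, w i * w j * ((2 * t * x i * x j) ^ n / n.factorial) := by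
    rw [Finset.sum_congr rfl (fun i _ => Finset.sum_congr rfl (fun j _ => hpt i j))]
    rw [Finset.sum_congr rfl (fun i (_ : i ∈ Finset.univ) =>
      (Summable.tsum_finsetSum (fun j (_ : j ∈ Finset.univ) => hsum i j)).symm)]
    exact (Summable.tsum_finsetSum (fun i _ => hsum2 i)).symm
  have hform : ∀ n : ℕ, (∑ i, ∑ j, w i * w j * ((2 * t * x i * x j) ^ n / n.factorial))
      = ((2 * t) ^ n / n.factorial) * (∑ i, w i * x i ^ n) ^ 2 := by
    intro n
    rw [sq, Finset.sum_mul_sum, Finset.mul_sum]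
    refine Finset.sum_congr rfl fun i _ => ?_
    rw [Finset.mul_sum]
    refine Finset.sum_congr rfl fun j _ => ?_
    rw [show (2 * t * x i * x j) ^ n = (2 * t) ^ n * x i ^ n * x j ^ n by
      rw [mul_pow, mul_pow]]
    ring
  simp_rw [hform] at hswap
  rw [hswap]
  obtain ⟨n₀, hn₀⟩ := exists_moment_ne x hx w hw
  have hG : Summable (fun n : ℕ => ((2 * t) ^ n / n.factorial) * (∑ i, w i * x i ^ n) ^ 2) := by
    have he : (fun n : ℕ => ((2 * t) ^ n / n.factorial) * (∑ i, w i * x i ^ n) ^ 2)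
        = fun n : ℕ => ∑ i, ∑ j, w i * w j * ((2 * t * x i * x j) ^ n / n.factorial) := by
      funext n; exact (hform n).symm
    rw [he]
    exact summable_sum (fun i _ => summable_sum (fun j _ => hsum i j))
  refine Summable.tsum_pos hG (fun n => ?_) n₀ ?_
  · positivity
  · have h1 : 0 < (2 * t) ^ n₀ / (n₀.factorial : ℝ) := by positivity
    exact mul_pos h1 (sq_pos_of_ne_zero hn₀)

lemma imq_integrable {a : ℝ} (ha : 0 < a) :
    IntegrableOn (fun t : ℝ => t ^ (-(1/2) : ℝ) * Real.exp (-(a * t))) (Ioi 0) := by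
  have := integrableOn_rpow_mul_exp_neg_mul_rpow (p := 1) (s := -(1/2)) (b := a)
    (by norm_num) one_pos ha
  simpa [Real.rpow_one, neg_mul] using this

lemma imq_integral_rep {a : ℝ} (ha : 0 < a) :
    (Real.sqrt a)⁻¹
      = (Real.sqrt π)⁻¹ * ∫ t in Ioi (0:ℝ), t ^ (-(1/2) : ℝ) * Real.exp (-(a * t)) := by
  have h := integral_rpow_mul_exp_neg_mul_rpow (p := 1) (q := -(1/2)) (b := a)
    one_pos (by norm_num) ha
  have h2 : (∫ t in Ioi (0:ℝ), t ^ (-(1/2) : ℝ) * Real.exp (-(a * t)))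
      = a ^ (-(1/2) : ℝ) * Real.sqrt π := by
    rw [show (∫ t in Ioi (0:ℝ), t ^ (-(1/2) : ℝ) * Real.exp (-(a * t)))
        = ∫ t in Ioi (0:ℝ), t ^ (-(1/2) : ℝ) * Real.exp (-a * t ^ (1:ℝ)) by
      refine setIntegral_congr_fun measurableSet_Ioi (fun t ht => ?_)
      rw [Real.rpow_one, neg_mul]]
    rw [h]
    norm_num [Real.Gamma_one_half_eq]
  rw [h2, show a ^ (-(1/2) : ℝ) = (Real.sqrt a)⁻¹ by
    rw [Real.sqrt_eq_rpow, ← Real.rpow_neg ha.le]]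
  have hπ : Real.sqrt π ≠ 0 := by positivity
  field_simp

theorem imq_interp_matrix_posdef (N : ℕ) (hN : 1 ≤ N)
    (x : Fin N → ℝ) (hx : Function.Injective x) (c : ℝ) (hc : 0 < c) :
    (Matrix.of fun i j => (Real.sqrt (c ^ 2 + (x i - x j) ^ 2))⁻¹).PosDef ∧
    IsUnit (Matrix.of fun i j => (Real.sqrt (c ^ 2 + (x i - x j) ^ 2))⁻¹).det := by
  have hpd : (Matrix.of fun i j => (Real.sqrt (c ^ 2 + (x i - x j) ^ 2))⁻¹).PosDef := by
    refine Matrix.PosDef.of_dotProduct_mulVec_pos ?_ ?_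
    · show _ = _
      ext i j
      simp only [Matrix.conjTranspose_apply, Matrix.of_apply, star_trivial]
      rw [show (x j - x i) ^ 2 = (x i - x j) ^ 2 by ring]
    · intro v hv
      have hsv : star v = v := by funext i; simp
      rw [hsv]
      have hint : ∀ i j : Fin N, IntegrableOn (fun t : ℝ =>
          v i * v j * (t ^ (-(1/2) : ℝ) * Real.exp (-((c ^ 2 + (x i - x j) ^ 2) * t))))
          (Ioi 0) :=
        fun i j => (imq_integrable (by positivity)).const_mul _
      have hdot : v ⬝ᵥ ((Matrix.of fun i j => (Real.sqrt (c ^ 2 + (x i - x j) ^ 2))⁻¹) *ᵥ v)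
          = (Real.sqrt π)⁻¹ * ∫ t in Ioi (0:ℝ), ∑ i, ∑ j,
            v i * v j * (t ^ (-(1/2) : ℝ) * Real.exp (-((c ^ 2 + (x i - x j) ^ 2) * t))) := by
        calc v ⬝ᵥ ((Matrix.of fun i j => (Real.sqrt (c ^ 2 + (x i - x j) ^ 2))⁻¹) *ᵥ v)
            = ∑ i, ∑ j, v i * v j * (Real.sqrt (c ^ 2 + (x i - x j) ^ 2))⁻¹ := by
              simp only [dotProduct, Matrix.mulVec, Matrix.of_apply]
              refine Finset.sum_congr rfl fun i _ => ?_
              rw [Finset.mul_sum]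
              exact Finset.sum_congr rfl fun j _ => by ring
          _ = ∑ i, ∑ j, (Real.sqrt π)⁻¹ * ∫ t in Ioi (0:ℝ),
                v i * v j * (t ^ (-(1/2) : ℝ) * Real.exp (-((c ^ 2 + (x i - x j) ^ 2) * t))) := by
              refine Finset.sum_congr rfl fun i _ => Finset.sum_congr rfl fun j _ => ?_
              have hpos : (0:ℝ) < c ^ 2 + (x i - x j) ^ 2 := by positivity
              rw [imq_integral_rep hpos, MeasureTheory.integral_const_mul]
              ring
          _ = (Real.sqrt π)⁻¹ * ∑ i, ∑ j, ∫ t in Ioi (0:ℝ),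
                v i * v j * (t ^ (-(1/2) : ℝ) * Real.exp (-((c ^ 2 + (x i - x j) ^ 2) * t))) := by
              rw [Finset.mul_sum]
              exact Finset.sum_congr rfl fun i _ => (Finset.mul_sum _ _ _).symm
          _ = (Real.sqrt π)⁻¹ * ∫ t in Ioi (0:ℝ), ∑ i, ∑ j,
                v i * v j * (t ^ (-(1/2) : ℝ) * Real.exp (-((c ^ 2 + (x i - x j) ^ 2) * t))) := by
              congr 1
              rw [Finset.sum_congr rfl (fun i (_ : i ∈ Finset.univ) =>
                (integral_finset_sum _ (fun j _ => hint i j)).symm)]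
              exact (integral_finset_sum _ (fun i _ =>
                integrable_finset_sum _ (fun j _ => hint i j))).symm
      rw [hdot]
      have hFpos : ∀ t ∈ Ioi (0:ℝ), 0 < ∑ i, ∑ j,
          v i * v j * (t ^ (-(1/2) : ℝ) * Real.exp (-((c ^ 2 + (x i - x j) ^ 2) * t))) := by
        intro t ht
        rw [mem_Ioi] at ht
        have h1 : ∑ i, ∑ j,
            v i * v j * (t ^ (-(1/2) : ℝ) * Real.exp (-((c ^ 2 + (x i - x j) ^ 2) * t)))
            = t ^ (-(1/2) : ℝ) * Real.exp (-(c ^ 2 * t))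
              * ∑ i, ∑ j, v i * v j * Real.exp (-((x i - x j) ^ 2 * t)) := by
          rw [Finset.mul_sum]
          refine Finset.sum_congr rfl fun i _ => ?_
          rw [Finset.mul_sum]
          refine Finset.sum_congr rfl fun j _ => ?_
          rw [show -((c ^ 2 + (x i - x j) ^ 2) * t)
              = -(c ^ 2 * t) + -((x i - x j) ^ 2 * t) by ring, Real.exp_add]
          ring
        rw [h1]
        exact mul_pos (mul_pos (Real.rpow_pos_of_pos ht _) (Real.exp_pos _))
          (gauss_quad_pos x hx v hv ht)
      have hFint : IntegrableOn (fun t : ℝ => ∑ i, ∑ j,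
          v i * v j * (t ^ (-(1/2) : ℝ) * Real.exp (-((c ^ 2 + (x i - x j) ^ 2) * t))))
          (Ioi 0) :=
        integrable_finset_sum _ (fun i _ => integrable_finset_sum _ (fun j _ => hint i j))
      refine mul_pos (by positivity) ?_
      rw [setIntegral_pos_iff_support_of_nonneg_ae
        ((ae_restrict_iff' measurableSet_Ioi).2 (ae_of_all _ (fun t ht => (hFpos t ht).le)))
        hFint]
      refine lt_of_lt_of_le ?_ (measure_mono (fun t ht => ⟨(hFpos t ht).ne', ht⟩))
      simp [Real.volume_Ioi]
  exact ⟨hpd, isUnit_iff_ne_zero.mpr hpd.det_pos.ne'⟩
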